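/- Fix $m>0$ and an integer $n \ge 2$, and let $X$ be a real-valued $C^1$ function and $Y$ a real-valued function on $(m/2,\infty)$. Then $r\,\psi_0(r)\,\beta_n(r) = (N-1)\,r\,\psi_0(r)^2 + 3m$ for all $r>0$, and for every $r > m/2$ the pointwise identity holds: $\frac{(r X'(r)-\beta_n(r) Y(r))^2 + 2(N-1)\alpha(r) X(r) Y(r)}{\alpha(r)\, r^2\, \psi_0(r)} = \frac{\beta_n(r)^2}{\alpha(r)\, r^2\, \psi_0(r)}\Big(Y(r) - \frac{r}{\beta_n(r)} X'(r) + \frac{(N-1)\alpha(r)}{\beta_n(r)^2} X(r)\Big)^2 + (N-1)\,\frac{d}{dr}\Big[\frac{X(r)^2}{(N-1)\, r\, \psi_0(r)^2 + 3m}\Big]$. -/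

import Mathlib

/-- `ψ₀(r) = 1 + m/(2r)`. -/
noncomputable def psi0 (m r : ℝ) : ℝ := 1 + m / (2 * r)

/-- `α(r) = 1 - m/(2r)`. -/
noncomputable def alphaF (m r : ℝ) : ℝ := 1 - m / (2 * r)

/-- `N = n(n+1)/2`. -/
noncomputable def Nn (n : ℕ) : ℝ := (n : ℝ) * ((n : ℝ) + 1) / 2

/-- `β_n(r) = (N-1) ψ₀(r) + 3m/(r ψ₀(r))`. -/
noncomputable def betaF (m : ℝ) (n : ℕ) (r : ℝ) : ℝ :=
  (Nn n - 1) * psi0 m r + 3 * m / (r * psi0 m r)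

private lemma key_alg (N1 r p a b x x' y : ℝ) (hr : r ≠ 0) (hp : p ≠ 0)
    (ha : a ≠ 0) (hb : b ≠ 0) :
    ((r * x' - b * y) ^ 2 + 2 * N1 * a * x * y) / (a * r ^ 2 * p)
      = b ^ 2 / (a * r ^ 2 * p) * (y - r / b * x' + N1 * a / b ^ 2 * x) ^ 2
        + N1 * ((2 * x * x' * (r * p * b) - x ^ 2 * (N1 * (p * a))) / (r * p * b) ^ 2) := by
  field_simp
  ring

/-- The completing-the-square identity behind the estimate of `I_n` (eq. (40a) in the paper):
`r ψ₀ β_n = (N-1) r ψ₀² + 3m`, and the integrand of `I_n` equals a perfect square plus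
the total derivative `(N-1) d/dr [X² / ((N-1) r ψ₀² + 3m)]`. -/
theorem integrand_complete_square (m : ℝ) (hm : 0 < m) (n : ℕ) (hn : 2 ≤ n)
    (X Y : ℝ → ℝ) (hX : ContDiffOn ℝ 1 X (Set.Ioi (m / 2))) :
    (∀ r : ℝ, 0 < r →
      r * psi0 m r * betaF m n r = (Nn n - 1) * r * (psi0 m r) ^ 2 + 3 * m) ∧
    ∀ r : ℝ, m / 2 < r →
      ((r * deriv X r - betaF m n r * Y r) ^ 2
          + 2 * (Nn n - 1) * alphaF m r * X r * Y r)
        / (alphaF m r * r ^ 2 * psi0 m r)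
      = (betaF m n r) ^ 2 / (alphaF m r * r ^ 2 * psi0 m r) *
          (Y r - r / betaF m n r * deriv X r
            + (Nn n - 1) * alphaF m r / (betaF m n r) ^ 2 * X r) ^ 2
        + (Nn n - 1) *
            deriv (fun s : ℝ => X s ^ 2 / ((Nn n - 1) * s * (psi0 m s) ^ 2 + 3 * m)) r := by
  have hN1 : (2:ℝ) ≤ Nn n - 1 := by
    have h2 : (2:ℝ) ≤ (n:ℝ) := by exact_mod_cast hn
    unfold Nn; nlinarith
  have hN1pos : 0 < Nn n - 1 := by linarith
  have hpart1 : ∀ r : ℝ, 0 < r →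
      r * psi0 m r * betaF m n r = (Nn n - 1) * r * (psi0 m r) ^ 2 + 3 * m := by
    intro r hr
    have hp : 0 < psi0 m r := by unfold psi0; positivity
    have hr0 : r ≠ 0 := ne_of_gt hr
    have hp0 : psi0 m r ≠ 0 := ne_of_gt hp
    unfold betaF
    field_simp
  refine ⟨hpart1, ?_⟩
  intro r hr
  have hr0 : 0 < r := lt_trans (by positivity) hr
  have hr0' : r ≠ 0 := ne_of_gt hr0
  have hp : 0 < psi0 m r := by unfold psi0; positivity
  have ha : 0 < alphaF m r := by
    unfold alphaF
    have : m / (2 * r) < 1 := by rw [div_lt_one (by positivity)]; linarith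
    linarith
  have hb : 0 < betaF m n r := by
    unfold betaF
    have h1 : 0 < (Nn n - 1) * psi0 m r := mul_pos hN1pos hp
    have h2 : 0 < 3 * m / (r * psi0 m r) := by positivity
    linarith
  -- derivative of X at r
  have hX1 : DifferentiableAt ℝ X r :=
    (hX.differentiableOn one_ne_zero).differentiableAt (isOpen_Ioi.mem_nhds hr)
  have hXsq : HasDerivAt (fun s => X s ^ 2) (2 * X r * deriv X r) r := by
    have h : HasDerivAt (fun s => X s ^ 2) _ r := (hX1.hasDerivAt).pow 2
    convert h using 1
    ring
  -- derivative of the denominator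
  have hden : HasDerivAt (fun s : ℝ => (Nn n - 1) * s * (psi0 m s) ^ 2 + 3 * m)
      ((Nn n - 1) * (psi0 m r * alphaF m r)) r := by
    have hinv : HasDerivAt (fun s : ℝ => m / (2 * s)) (-(m / (2 * r ^ 2))) r := by
      have h : HasDerivAt (fun s : ℝ => m / 2 * s⁻¹) _ r := (hasDerivAt_inv hr0').const_mul (m / 2)
      convert h using 1
      · funext s
        rw [div_eq_mul_inv, mul_inv]
        ring
      · rw [div_eq_mul_inv, mul_inv]
        ring
    have hpsi : HasDerivAt (fun s : ℝ => psi0 m s) (-(m / (2 * r ^ 2))) r := by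
      unfold psi0
      simpa using (hinv.const_add 1)
    have hsq : HasDerivAt (fun s : ℝ => s * (psi0 m s) ^ 2)
        ((psi0 m r) ^ 2 + r * (2 * psi0 m r * (-(m / (2 * r ^ 2))))) r := by
      simpa using (show HasDerivAt (fun s : ℝ => s * (psi0 m s) ^ 2) _ r from (hasDerivAt_id r).mul (hpsi.pow 2))
    have h : HasDerivAt (fun x : ℝ => (Nn n - 1) * (x * psi0 m x ^ 2) + 3 * m) _ r :=
      (hsq.const_mul (Nn n - 1)).add_const (3 * m)
    convert h using 1
    · funext s; ring
    · unfold psi0 alphaF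
      field_simp
      ring
  have hd0 : (Nn n - 1) * r * (psi0 m r) ^ 2 + 3 * m ≠ 0 := by positivity
  have hquot : HasDerivAt (fun s : ℝ => X s ^ 2 / ((Nn n - 1) * s * (psi0 m s) ^ 2 + 3 * m))
      ((2 * X r * deriv X r * ((Nn n - 1) * r * (psi0 m r) ^ 2 + 3 * m)
        - X r ^ 2 * ((Nn n - 1) * (psi0 m r * alphaF m r)))
        / ((Nn n - 1) * r * (psi0 m r) ^ 2 + 3 * m) ^ 2) r :=
    hXsq.div hden hd0
  rw [hquot.deriv]
  rw [← hpart1 r hr0]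
  exact key_alg (Nn n - 1) r (psi0 m r) (alphaF m r) (betaF m n r) (X r) (deriv X r) (Y r)
    hr0' (ne_of_gt hp) (ne_of_gt ha) (ne_of_gt hb)
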